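/- arXiv:2504.08681 — 9 statements merged into one kernel-verified Lean document; each statement's English description precedes it below -/
import Mathlib

section
/- For r ≥ 1, the map a ↦ (E[min_{1≤i≤n} ‖X - a_i‖^r])^{1/r} from E^n to ℝ is Lipschitz continuous with Lipschitz constant 1 with respect to the max-norm ‖(x_1,...,x_n)‖ = max_i ‖x_i‖ on E^n. -/
open MeasureTheory

/-- The `L^r`-quantization error `a ↦ (E[min_i ‖X - a_i‖^r])^{1/r}` is Lipschitz with
constant 1 for the max-norm on `E^n`. -/
theorem distortion_rpow_inv_lipschitz
    {E : Type*} [NormedAddCommGroup E] [NormedSpace ℝ E] [CompleteSpace E]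
    {Ω : Type*} [MeasurableSpace Ω] (μ : Measure Ω) [IsProbabilityMeasure μ]
    [MeasurableSpace E] [BorelSpace E]
    (X : Ω → E) (hX : Measurable X) (r : ℝ) (hr : 1 ≤ r)
    (hint : Integrable (fun ω => ‖X ω‖ ^ r) μ)
    (n : ℕ) (hn : 0 < n) :
    ∀ a b : Fin n → E,
      |(∫ ω, (⨅ i : Fin n, ‖X ω - a i‖) ^ r ∂μ) ^ r⁻¹ -
        (∫ ω, (⨅ i : Fin n, ‖X ω - b i‖) ^ r ∂μ) ^ r⁻¹|
      ≤ ⨆ i : Fin n, ‖a i - b i‖ := by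
  intro a b
  haveI : Nonempty (Fin n) := ⟨⟨0, hn⟩⟩
  set i0 : Fin n := ⟨0, hn⟩
  set p : ENNReal := ENNReal.ofReal r with hp
  have hr0 : (0:ℝ) < r := lt_of_lt_of_le one_pos hr
  have hp0 : p ≠ 0 := by simp [hp, ENNReal.ofReal_eq_zero, not_le, hr0]
  have hpt : p ≠ ⊤ := ENNReal.ofReal_ne_top
  have ptr : p.toReal = r := ENNReal.toReal_ofReal hr0.le
  have hp1 : 1 ≤ p := by
    rw [hp, ← ENNReal.ofReal_one]
    exact ENNReal.ofReal_le_ofReal hr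
  set c : ℝ := ⨆ i : Fin n, ‖a i - b i‖ with hcdef
  have hbddS : BddAbove (Set.range fun i : Fin n => ‖a i - b i‖) :=
    (Set.finite_range _).bddAbove
  have hc0 : 0 ≤ c := le_trans (norm_nonneg (a i0 - b i0)) (le_ciSup hbddS i0)
  -- the infimum functions
  set g : (Fin n → E) → Ω → ℝ := fun u ω => ⨅ i : Fin n, ‖X ω - u i‖ with hg
  have hbdd : ∀ (u : Fin n → E) (ω : Ω),
      BddBelow (Set.range fun i : Fin n => ‖X ω - u i‖) :=
    fun u ω => (Set.finite_range _).bddBelow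
  have hg0 : ∀ u ω, 0 ≤ g u ω := fun u ω => Real.iInf_nonneg fun i => norm_nonneg _
  have hgm : ∀ u, Measurable (g u) := by
    intro u
    exact Measurable.iInf fun i =>
      ((continuous_id.sub continuous_const).norm.measurable).comp hX
  -- pointwise Lipschitz bound
  have hpoint : ∀ (u v : Fin n → E) (ω : Ω),
      g u ω ≤ g v ω + (⨆ i : Fin n, ‖u i - v i‖) := by
    intro u v ω
    have hbS : BddAbove (Set.range fun i : Fin n => ‖u i - v i‖) :=
      (Set.finite_range _).bddAbove
    have h1 : g u ω - (⨆ i : Fin n, ‖u i - v i‖) ≤ g v ω := by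
      refine le_ciInf fun i => sub_le_iff_le_add.2 ?_
      calc g u ω ≤ ‖X ω - u i‖ := ciInf_le (hbdd u ω) i
        _ ≤ ‖X ω - v i‖ + ‖v i - u i‖ :=
            norm_sub_le_norm_sub_add_norm_sub (X ω) (v i) (u i)
        _ ≤ ‖X ω - v i‖ + (⨆ j : Fin n, ‖u j - v j‖) := by
            gcongr
            rw [norm_sub_rev]
            exact le_ciSup hbS i
    linarith
  -- membership in Lᵖ
  have hXp : MemLp (fun ω => ‖X ω‖) p μ := by
    rw [← memLp_norm_rpow_iff hX.norm.aestronglyMeasurable hp0 hpt, ENNReal.div_self hp0 hpt,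
      memLp_one_iff_integrable]
    simpa [ptr] using hint
  have hgmem : ∀ u : Fin n → E, MemLp (g u) p μ := by
    intro u
    refine MemLp.of_le (hXp.add (memLp_const ‖u i0‖)) (hgm u).aestronglyMeasurable
      (Filter.Eventually.of_forall fun ω => ?_)
    rw [Real.norm_eq_abs, abs_of_nonneg (hg0 u ω)]
    calc g u ω ≤ ‖X ω - u i0‖ := ciInf_le (hbdd u ω) i0
      _ ≤ ‖X ω‖ + ‖u i0‖ := norm_sub_le _ _
      _ ≤ ‖‖X ω‖ + ‖u i0‖‖ := le_abs_self _
  -- identify the integrals with eLpNorms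
  have key : ∀ u : Fin n → E,
      (∫ ω, (⨅ i : Fin n, ‖X ω - u i‖) ^ r ∂μ) ^ r⁻¹ = (eLpNorm (g u) p μ).toReal := by
    intro u
    rw [(hgmem u).eLpNorm_eq_integral_rpow_norm hp0 hpt]
    have : (fun ω => ‖g u ω‖ ^ p.toReal) = fun ω => (⨅ i : Fin n, ‖X ω - u i‖) ^ r := by
      funext ω
      rw [ptr, Real.norm_eq_abs, abs_of_nonneg (hg0 u ω)]
    rw [this, ENNReal.toReal_ofReal]
    · rw [ptr]
    · rw [ptr]
      apply Real.rpow_nonneg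
      exact integral_nonneg fun ω => Real.rpow_nonneg (hg0 u ω) r
  rw [key a, key b]
  -- eLpNorm estimates
  have hdiff : ∀ u v : Fin n → E,
      eLpNorm (g u) p μ ≤ eLpNorm (g v) p μ + ENNReal.ofReal (⨆ i : Fin n, ‖u i - v i‖) := by
    intro u v
    have hsub : eLpNorm (g u - g v) p μ ≤ ENNReal.ofReal (⨆ i : Fin n, ‖u i - v i‖) := by
      have hbound : ∀ᵐ ω ∂μ, ‖(g u - g v) ω‖ ≤ (⨆ i : Fin n, ‖u i - v i‖) := by
        refine Filter.Eventually.of_forall fun ω => ?_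
        rw [Pi.sub_apply, Real.norm_eq_abs, abs_sub_le_iff]
        constructor
        · linarith [hpoint u v ω]
        · have hswap : (⨆ i : Fin n, ‖u i - v i‖) = ⨆ i : Fin n, ‖v i - u i‖ :=
            iSup_congr fun i => norm_sub_rev _ _
          linarith [hpoint v u ω, hswap]
      calc eLpNorm (g u - g v) p μ
          ≤ μ Set.univ ^ p.toReal⁻¹ * ENNReal.ofReal (⨆ i : Fin n, ‖u i - v i‖) :=
            eLpNorm_le_of_ae_bound hbound
        _ = ENNReal.ofReal (⨆ i : Fin n, ‖u i - v i‖) := by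
            simp
    calc eLpNorm (g u) p μ = eLpNorm ((g u - g v) + g v) p μ := by
          congr 1; funext ω; simp
      _ ≤ eLpNorm (g u - g v) p μ + eLpNorm (g v) p μ :=
          eLpNorm_add_le (((hgm u).sub (hgm v)).aestronglyMeasurable)
            (hgm v).aestronglyMeasurable hp1
      _ ≤ ENNReal.ofReal (⨆ i : Fin n, ‖u i - v i‖) + eLpNorm (g v) p μ := by
          gcongr
      _ = eLpNorm (g v) p μ + ENNReal.ofReal (⨆ i : Fin n, ‖u i - v i‖) := by
          rw [add_comm]
    -- done
  have hA : eLpNorm (g a) p μ ≠ ⊤ := (hgmem a).2.ne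
  have hB : eLpNorm (g b) p μ ≠ ⊤ := (hgmem b).2.ne
  have hba : c = ⨆ i : Fin n, ‖b i - a i‖ := iSup_congr fun i => norm_sub_rev (a i) (b i)
  have h1 : (eLpNorm (g a) p μ).toReal ≤ (eLpNorm (g b) p μ).toReal + c := by
    have := hdiff a b
    have h2 : (eLpNorm (g a) p μ).toReal ≤ (eLpNorm (g b) p μ + ENNReal.ofReal c).toReal :=
      ENNReal.toReal_mono (by finiteness) (by rwa [← hcdef] at this)
    rwa [ENNReal.toReal_add hB ENNReal.ofReal_ne_top, ENNReal.toReal_ofReal hc0] at h2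
  have h2 : (eLpNorm (g b) p μ).toReal ≤ (eLpNorm (g a) p μ).toReal + c := by
    have := hdiff b a
    rw [← hba] at this
    have h2 : (eLpNorm (g b) p μ).toReal ≤ (eLpNorm (g a) p μ + ENNReal.ofReal c).toReal :=
      ENNReal.toReal_mono (by finiteness) this
    rwa [ENNReal.toReal_add hA ENNReal.ofReal_ne_top, ENNReal.toReal_ofReal hc0] at h2
  rw [abs_sub_le_iff]
  constructor <;> linarith
end

section
/- Let a = (a_1,...,a_n) ∈ E^n be a local minimum of the L^r-distortion function G, with each a_i a non-isolated point of supp(P). Then the components a_1,...,a_n are pairwise distinct. -/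
open MeasureTheory

/-- The support of a Borel measure: points all of whose open neighbourhoods
have positive measure. -/
def measureSupport {E : Type*} [TopologicalSpace E] [MeasurableSpace E]
    (P : Measure E) : Set E :=
  {x : E | ∀ U : Set E, IsOpen U → x ∈ U → 0 < P U}

private lemma add_rpow_aux {s t r : ℝ} (hs : 0 ≤ s) (ht : 0 ≤ t) (hr : 0 ≤ r) :
    (s + t) ^ r ≤ 2 ^ r * (s ^ r + t ^ r) := by
  have h1 : s + t ≤ 2 * max s t := by
    rcases le_total s t with h | h
    · rw [max_eq_right h]; linarith
    · rw [max_eq_left h]; linarith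
  have h2 : (s + t) ^ r ≤ (2 * max s t) ^ r :=
    Real.rpow_le_rpow (by linarith) h1 hr
  have h3 : (2 * max s t) ^ r = 2 ^ r * (max s t) ^ r :=
    Real.mul_rpow (by norm_num) (le_max_of_le_left hs)
  have h4 : (max s t) ^ r ≤ s ^ r + t ^ r := by
    rcases max_cases s t with ⟨hm, _⟩ | ⟨hm, _⟩ <;> rw [hm]
    · nlinarith [Real.rpow_nonneg ht r]
    · nlinarith [Real.rpow_nonneg hs r]
  calc (s + t) ^ r ≤ 2 ^ r * (max s t) ^ r := by rw [← h3]; exact h2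
    _ ≤ 2 ^ r * (s ^ r + t ^ r) := by
        have : (0:ℝ) ≤ 2 ^ r := Real.rpow_nonneg (by norm_num) r
        nlinarith

private lemma measurable_distortion {E : Type*} [NormedAddCommGroup E]
    [MeasurableSpace E] [BorelSpace E] (r : ℝ) (hr : 0 ≤ r)
    {n : ℕ} (c : Fin n → E) :
    Measurable (fun x : E => (⨅ i, ‖x - c i‖) ^ r) := by
  have h1 : Measurable (fun x : E => ⨅ i, ‖x - c i‖) :=
    Measurable.iInf fun i =>
      ((continuous_id.sub continuous_const).norm).measurable
  exact (Real.continuous_rpow_const hr).measurable.comp h1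

private lemma integrable_distortion {E : Type*} [NormedAddCommGroup E]
    [MeasurableSpace E] [BorelSpace E]
    (P : Measure E) [IsProbabilityMeasure P] {r : ℝ} (hr : 0 < r)
    (hint : Integrable (fun x => ‖x‖ ^ r) P)
    {n : ℕ} (hn : 0 < n) (c : Fin n → E) :
    Integrable (fun x => (⨅ i, ‖x - c i‖) ^ r) P := by
  have hNE : Nonempty (Fin n) := ⟨⟨0, hn⟩⟩
  set k0 : Fin n := ⟨0, hn⟩
  have hg : Integrable (fun x => 2 ^ r * (‖x‖ ^ r + ‖c k0‖ ^ r)) P :=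
    ((hint.add (integrable_const _)).const_mul _)
  refine Integrable.mono' hg (measurable_distortion r hr.le c).aestronglyMeasurable
    (ae_of_all _ fun x => ?_)
  have hnn : 0 ≤ ⨅ i, ‖x - c i‖ := Real.iInf_nonneg fun i => norm_nonneg _
  rw [Real.norm_of_nonneg (Real.rpow_nonneg hnn r)]
  have h1 : (⨅ i, ‖x - c i‖) ≤ ‖x‖ + ‖c k0‖ :=
    (ciInf_le (Set.Finite.bddBelow (Set.finite_range _)) k0).trans (norm_sub_le x (c k0))
  calc (⨅ i, ‖x - c i‖) ^ r ≤ (‖x‖ + ‖c k0‖) ^ r :=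
        Real.rpow_le_rpow hnn h1 hr.le
    _ ≤ 2 ^ r * (‖x‖ ^ r + ‖c k0‖ ^ r) :=
        add_rpow_aux (norm_nonneg _) (norm_nonneg _) hr.le

/-- The components of a local minimum of the `L^r`-distortion whose entries are
non-isolated points of `supp(P)` are pairwise distinct. -/
theorem local_min_components_distinct
    {E : Type*} [NormedAddCommGroup E] [NormedSpace ℝ E] [CompleteSpace E]
    [SecondCountableTopology E] [MeasurableSpace E] [BorelSpace E]
    (P : Measure E) [IsProbabilityMeasure P]
    (r : ℝ) (hr : 0 < r) (hint : Integrable (fun x => ‖x‖ ^ r) P)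
    (n : ℕ) (hn : 0 < n) (a : Fin n → E)
    (hmin : IsLocalMin (fun b : Fin n → E => ∫ x, (⨅ i, ‖x - b i‖) ^ r ∂P) a)
    (hni : ∀ i, a i ∈ closure (measureSupport P \ {a i})) :
    Function.Injective a := by
  classical
  have hNE : Nonempty (Fin n) := ⟨⟨0, hn⟩⟩
  intro i j hij
  by_contra hne
  -- extract a metric neighbourhood from local minimality
  obtain ⟨ε, hε, hball⟩ := Metric.eventually_nhds_iff.mp hmin
  -- a positive lower bound on distances from `a i` to components distinct from it
  set ε' : ℝ := Finset.univ.inf' Finset.univ_nonempty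
    (fun k => if a k = a i then 1 else ‖a k - a i‖) with hε'def
  have hε' : 0 < ε' := by
    rw [hε'def, Finset.lt_inf'_iff]
    intro k _
    split_ifs with h
    · norm_num
    · rw [norm_pos_iff, sub_ne_zero]; exact h
  -- choose b in supp(P) \ {a i} close to a i
  obtain ⟨b, hbS, hbd⟩ :=
    Metric.mem_closure_iff.mp (hni i) (min ε ε') (lt_min hε hε')
  have hbne_ai : b ≠ a i := fun h => hbS.2 h
  have hbd_ε : dist (a i) b < ε := lt_of_lt_of_le hbd (min_le_left _ _)
  have hbd_ε' : dist (a i) b < ε' := lt_of_lt_of_le hbd (min_le_right _ _)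
  -- b differs from every component
  have hbne : ∀ k, b ≠ a k := by
    intro k hk
    by_cases h : a k = a i
    · exact hbne_ai (hk.trans h)
    · have h1 : ε' ≤ ‖a k - a i‖ := by
        have := Finset.inf'_le (fun k => if a k = a i then 1 else ‖a k - a i‖)
          (Finset.mem_univ k)
        rwa [if_neg h] at this
      have h2 : ‖a k - a i‖ = dist (a i) b := by
        rw [hk, dist_eq_norm, norm_sub_rev]
      rw [h2] at h1
      exact absurd hbd_ε' (not_lt.mpr h1)
  -- the perturbed configuration
  set a' : Fin n → E := Function.update a j b with ha'def
  have ha'j : a' j = b := Function.update_self j b a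
  have ha'ne : ∀ k, k ≠ j → a' k = a k := fun k hk => Function.update_of_ne hk b a
  -- minimal distance from b to the components
  set δ : ℝ := Finset.univ.inf' Finset.univ_nonempty (fun k => ‖b - a k‖) with hδdef
  have hδ : 0 < δ := by
    rw [hδdef, Finset.lt_inf'_iff]
    intro k _
    rw [norm_pos_iff, sub_ne_zero]
    exact hbne k
  have hδle : ∀ k, δ ≤ ‖b - a k‖ := fun k =>
    Finset.inf'_le (fun k => ‖b - a k‖) (Finset.mem_univ k)
  set B : Set E := Metric.ball b (δ / 3) with hBdef
  -- abbreviations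
  set fold : E → ℝ := fun x => (⨅ k, ‖x - a k‖) ^ r with hfold
  set fnew : E → ℝ := fun x => (⨅ k, ‖x - a' k‖) ^ r with hfnew
  have hbdd : ∀ (c : Fin n → E) (x : E),
      BddBelow (Set.range fun k => ‖x - c k‖) := fun c x =>
    Set.Finite.bddBelow (Set.finite_range _)
  have hnn : ∀ (c : Fin n → E) (x : E), 0 ≤ ⨅ k, ‖x - c k‖ := fun c x =>
    Real.iInf_nonneg fun k => norm_nonneg _
  -- pointwise: new infimum ≤ old infimum
  have hle : ∀ x, (⨅ k, ‖x - a' k‖) ≤ ⨅ k, ‖x - a k‖ := by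
    intro x
    refine le_ciInf fun k => ?_
    by_cases hk : k = j
    · subst hk
      refine (ciInf_le (hbdd a' x) i).trans ?_
      rw [ha'ne i hne, hij]
    · exact (ciInf_le (hbdd a' x) k).trans_eq (by rw [ha'ne k hk])
  have hle' : ∀ x, fnew x ≤ fold x := fun x =>
    Real.rpow_le_rpow (hnn a' x) (hle x) hr.le
  -- the uniform gap on B
  set c : ℝ := (2 * δ / 3) ^ r - (δ / 3) ^ r with hcdef
  have hc : 0 < c := by
    have := Real.rpow_lt_rpow (by positivity : (0:ℝ) ≤ δ / 3)
      (by linarith : δ / 3 < 2 * δ / 3) hr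
    simpa [hcdef, sub_pos] using this
  have hgap : ∀ x ∈ B, c ≤ fold x - fnew x := by
    intro x hx
    have hxb : ‖x - b‖ < δ / 3 := by
      rw [← dist_eq_norm]; exact hx
    have hold : 2 * δ / 3 ≤ ⨅ k, ‖x - a k‖ := by
      refine le_ciInf fun k => ?_
      have htri : ‖b - a k‖ ≤ ‖b - x‖ + ‖x - a k‖ := by
        have := norm_sub_le_norm_sub_add_norm_sub b x (a k)
        linarith [norm_sub_le (b - x) (x - a k)]
      have hbx : ‖b - x‖ < δ / 3 := by rw [norm_sub_rev]; exact hxb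
      have := hδle k
      linarith
    have hnew : (⨅ k, ‖x - a' k‖) ≤ δ / 3 := by
      refine le_of_lt ?_
      refine lt_of_le_of_lt (ciInf_le (hbdd a' x) j) ?_
      rw [ha'j]; exact hxb
    have h1 : (2 * δ / 3) ^ r ≤ fold x :=
      Real.rpow_le_rpow (by positivity) hold hr.le
    have h2 : fnew x ≤ (δ / 3) ^ r :=
      Real.rpow_le_rpow (hnn a' x) hnew hr.le
    rw [hcdef]; linarith
  -- integrability
  have h_old : Integrable fold P := integrable_distortion P hr hint hn a
  have h_new : Integrable fnew P := integrable_distortion P hr hint hn a'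
  have hdiff : Integrable (fun x => fold x - fnew x) P := h_old.sub h_new
  -- B has positive measure
  have hB : 0 < P B :=
    hbS.1 B Metric.isOpen_ball (Metric.mem_ball_self (by positivity))
  have hBne : P B ≠ ⊤ := measure_ne_top P B
  -- strict inequality of integrals
  have key : 0 < ∫ x, (fold x - fnew x) ∂P := by
    have h1 : c * (P B).toReal ≤ ∫ x in B, (fold x - fnew x) ∂P :=
      setIntegral_ge_of_const_le_real measurableSet_ball hBne
        (fun x hx => hgap x hx) hdiff.integrableOn
    have h2 : ∫ x in B, (fold x - fnew x) ∂P ≤ ∫ x, (fold x - fnew x) ∂P :=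
      setIntegral_le_integral hdiff (ae_of_all _ fun x => sub_nonneg.mpr (hle' x))
    have h3 : 0 < c * (P B).toReal :=
      mul_pos hc (ENNReal.toReal_pos hB.ne' hBne)
    linarith
  rw [integral_sub h_old h_new] at key
  -- contradiction with local minimality
  have hda : dist a' a < ε := by
    rw [dist_pi_lt_iff hε]
    intro k
    by_cases hk : k = j
    · rw [hk, ha'j]
      calc dist b (a j) = dist (a i) b := by rw [← hij, dist_comm]
        _ < ε := hbd_ε
    · rw [ha'ne k hk, dist_self]; exact hε
  have := hball hda
  simp only [← hfold, ← hfnew] at this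
  linarith
end

section
/- Let r ≥ 1 and let a = (a_1,...,a_n) ∈ E^n be a local minimum of the L^r-distortion function G whose components are non-isolated points of supp(P). Then for every i and every Borel set C with W_{a_i}(Γ) ⊆ C ⊆ V_{a_i}(Γ) (where Γ = {a_1,...,a_n}), the point a_i minimizes y ↦ ∫_C ‖x - y‖^r dP(x) over y ∈ E. -/
open MeasureTheory EMetric

section Aux

variable {E : Type*} [NormedAddCommGroup E] [NormedSpace ℝ E]

lemma rpow_norm_sub_le (x y : E) {r : ℝ} (hr : 0 ≤ r) :
    ‖x - y‖ ^ r ≤ 2 ^ r * ‖x‖ ^ r + 2 ^ r * ‖y‖ ^ r := by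
  have h1 : ‖x - y‖ ≤ 2 * max ‖x‖ ‖y‖ := by
    have h2 := le_max_left ‖x‖ ‖y‖
    have h3 := le_max_right ‖x‖ ‖y‖
    have := norm_sub_le x y
    linarith
  have hmax : (0:ℝ) ≤ max ‖x‖ ‖y‖ := le_trans (norm_nonneg x) (le_max_left _ _)
  calc ‖x - y‖ ^ r ≤ (2 * max ‖x‖ ‖y‖) ^ r := Real.rpow_le_rpow (norm_nonneg _) h1 hr
    _ = 2 ^ r * (max ‖x‖ ‖y‖) ^ r := Real.mul_rpow (by norm_num) hmax
    _ ≤ 2 ^ r * (‖x‖ ^ r + ‖y‖ ^ r) := by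
        have h2r : (0:ℝ) ≤ 2 ^ r := Real.rpow_nonneg (by norm_num) r
        refine mul_le_mul_of_nonneg_left ?_ h2r
        rcases le_total ‖x‖ ‖y‖ with h | h
        · rw [max_eq_right h]
          have := Real.rpow_nonneg (norm_nonneg x) r
          linarith
        · rw [max_eq_left h]
          have := Real.rpow_nonneg (norm_nonneg y) r
          linarith
    _ = 2 ^ r * ‖x‖ ^ r + 2 ^ r * ‖y‖ ^ r := by ring

variable [MeasurableSpace E] [BorelSpace E] [SecondCountableTopology E]

lemma integrable_rpow_norm_sub (P : Measure E) [IsProbabilityMeasure P] {r : ℝ} (hr : 0 ≤ r)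
    (hint : Integrable (fun x => ‖x‖ ^ r) P) (y : E) :
    Integrable (fun x => ‖x - y‖ ^ r) P := by
  have hm : AEStronglyMeasurable (fun x => ‖x - y‖ ^ r) P :=
    (((continuous_id.sub continuous_const).norm.rpow_const
      (fun x => Or.inr hr))).aestronglyMeasurable
  refine Integrable.mono' ((hint.const_mul (2 ^ r)).add
    (integrable_const (2 ^ r * ‖y‖ ^ r))) hm (Filter.Eventually.of_forall fun x => ?_)
  rw [Real.norm_of_nonneg (Real.rpow_nonneg (norm_nonneg _) r)]
  exact rpow_norm_sub_le x y hr

end Aux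

/-- At a local minimum `a` of the `L^r`-distortion (`r ≥ 1`) with components that are
non-isolated points of `supp(P)`, each `a i` minimizes `y ↦ ∫_C ‖x - y‖^r dP(x)`
for every Borel set `C` squeezed between the open and closed Voronoi cells of `a i`. -/
theorem local_min_component_is_conditional_optimum
    {E : Type*} [NormedAddCommGroup E] [NormedSpace ℝ E] [CompleteSpace E]
    [SecondCountableTopology E] [MeasurableSpace E] [BorelSpace E]
    (P : Measure E) [IsProbabilityMeasure P]
    (r : ℝ) (hr : 1 ≤ r) (hint : Integrable (fun x => ‖x‖ ^ r) P)
    (n : ℕ) (hn : 0 < n) (a : Fin n → E)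
    (hmin : IsLocalMin (fun b : Fin n → E => ∫ x, (⨅ i, ‖x - b i‖) ^ r ∂P) a)
    (hni : ∀ i, a i ∈ closure (measureSupport P \ {a i})) :
    ∀ i : Fin n, ∀ C : Set E, MeasurableSet C →
      {x : E | edist x (a i) < infEdist x (Set.range a \ {a i})} ⊆ C →
      C ⊆ {x : E | edist x (a i) = infEdist x (Set.range a)} →
      ∀ y : E, ∫ x in C, ‖x - a i‖ ^ r ∂P ≤ ∫ x in C, ‖x - y‖ ^ r ∂P := by
  intro i C hC hWC hCV
  classical
  have hr0 : (0:ℝ) ≤ r := le_trans zero_le_one hr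
  haveI : Nonempty (Fin n) := ⟨⟨0, hn⟩⟩
  have i0 : Fin n := ⟨0, hn⟩
  -- the distortion integrand
  set g : (Fin n → E) → E → ℝ := fun b x => (⨅ j, ‖x - b j‖) ^ r with hg
  have hbdd : ∀ (b : Fin n → E) (x : E), BddBelow (Set.range fun j => ‖x - b j‖) :=
    fun b x => ⟨0, by rintro _ ⟨j, rfl⟩; exact norm_nonneg _⟩
  have hiInf_nonneg : ∀ (b : Fin n → E) (x : E), 0 ≤ ⨅ j, ‖x - b j‖ :=
    fun b x => le_ciInf fun j => norm_nonneg _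
  have hiInf_le : ∀ (b : Fin n → E) (x : E) (j : Fin n), (⨅ j, ‖x - b j‖) ≤ ‖x - b j‖ :=
    fun b x j => ciInf_le (hbdd b x) j
  -- integrability of the distortion integrand
  have hinty : ∀ y : E, Integrable (fun x => ‖x - y‖ ^ r) P :=
    fun y => integrable_rpow_norm_sub P hr0 hint y
  have hgmeas : ∀ b : Fin n → E, AEStronglyMeasurable (g b) P := by
    intro b
    have h1 : Measurable fun x : E => ⨅ j, ‖x - b j‖ :=
      Measurable.iInf fun j => ((continuous_id.sub continuous_const).norm).measurable
    exact (((Real.continuous_rpow_const hr0).measurable).comp h1).aestronglyMeasurable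
  have hgint : ∀ b : Fin n → E, Integrable (g b) P := by
    intro b
    refine Integrable.mono' (hinty (b i0)) (hgmeas b) (Filter.Eventually.of_forall fun x => ?_)
    rw [Real.norm_of_nonneg (Real.rpow_nonneg (hiInf_nonneg b x) r)]
    exact Real.rpow_le_rpow (hiInf_nonneg b x) (hiInf_le b x i0) hr0
  -- edist to norm comparison
  have hedist : ∀ (x u v : E), edist x u ≤ edist x v ↔ ‖x - u‖ ≤ ‖x - v‖ := by
    intro x u v
    rw [edist_dist, edist_dist, ENNReal.ofReal_le_ofReal_iff dist_nonneg,
      dist_eq_norm, dist_eq_norm]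
  -- on C, the closest point is a i
  have hCmin : ∀ x ∈ C, ∀ j, ‖x - a i‖ ≤ ‖x - a j‖ := by
    intro x hx j
    have h1 : edist x (a i) = infEdist x (Set.range a) := hCV hx
    have h2 : infEdist x (Set.range a) ≤ edist x (a j) :=
      infEdist_le_edist_of_mem (Set.mem_range_self j)
    exact (hedist x (a i) (a j)).mp (h1 ▸ h2)
  have hgCeq : ∀ x ∈ C, g a x = ‖x - a i‖ ^ r := by
    intro x hx
    have : (⨅ j, ‖x - a j‖) = ‖x - a i‖ :=
      le_antisymm (hiInf_le a x i) (le_ciInf (hCmin x hx))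
    simp [hg, this]
  -- outside C, replacing a i does not increase the distortion
  have hout : ∀ x ∉ C, ∀ y : E, g (Function.update a i y) x ≤ g a x := by
    intro x hx y
    have hxW : infEdist x (Set.range a \ {a i}) ≤ edist x (a i) := by
      by_contra h
      exact hx (hWC (by simpa using lt_of_not_ge h))
    -- there exists j with a j ≠ a i
    have hne : ∃ j, a j ≠ a i := by
      by_contra h
      push_neg at h
      have hempty : Set.range a \ {a i} = ∅ := by
        ext z
        simp only [Set.mem_diff, Set.mem_range, Set.mem_singleton_iff,
          Set.mem_empty_iff_false, iff_false, not_and, not_not]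
        rintro ⟨j, rfl⟩; exact h j
      rw [hempty] at hxW; change Metric.infEDist x ∅ ≤ _ at hxW; rw [infEdist_empty] at hxW
      exact (edist_lt_top x (a i)).not_ge hxW
    obtain ⟨j1, hj1⟩ := hne
    -- pick the minimizer over indices with a j ≠ a i
    obtain ⟨j0, hj0t, hj0min⟩ := Finset.exists_min_image
      (Finset.univ.filter fun j => a j ≠ a i) (fun j => ‖x - a j‖)
      ⟨j1, Finset.mem_filter.mpr ⟨Finset.mem_univ _, hj1⟩⟩
    have hj0ne : a j0 ≠ a i := (Finset.mem_filter.mp hj0t).2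
    have hj0min' : ∀ j, a j ≠ a i → ‖x - a j0‖ ≤ ‖x - a j‖ :=
      fun j hj => hj0min j (Finset.mem_filter.mpr ⟨Finset.mem_univ _, hj⟩)
    -- edist x (a j0) ≤ infEdist
    have h1 : edist x (a j0) ≤ infEdist x (Set.range a \ {a i}) := by
      change edist x (a j0) ≤ Metric.infEDist x (Set.range a \ {a i})
      rw [le_infEdist]
      rintro z ⟨⟨j, rfl⟩, hz⟩
      exact (hedist x (a j0) (a j)).mpr
        (hj0min' j (by simpa using hz))
    have h2 : ‖x - a j0‖ ≤ ‖x - a i‖ := (hedist x (a j0) (a i)).mp (h1.trans hxW)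
    have h3 : ∀ j, ‖x - a j0‖ ≤ ‖x - a j‖ := by
      intro j
      by_cases hj : a j = a i
      · rw [hj]; exact h2
      · exact hj0min' j hj
    have hji : j0 ≠ i := fun h => hj0ne (by rw [h])
    have h4 : (⨅ j, ‖x - Function.update a i y j‖) ≤ ⨅ j, ‖x - a j‖ := by
      refine le_trans ?_ (le_ciInf h3)
      have : ‖x - Function.update a i y j0‖ = ‖x - a j0‖ := by
        rw [Function.update_of_ne hji]
      exact this ▸ hiInf_le (Function.update a i y) x j0
    exact Real.rpow_le_rpow (hiInf_nonneg _ x) h4 hr0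
  -- the conditional distortion function
  set f : E → ℝ := fun y => ∫ x in C, ‖x - y‖ ^ r ∂P with hf
  -- f has a local minimum at a i
  have hlocal : IsLocalMin f (a i) := by
    set G : (Fin n → E) → ℝ := fun b => ∫ x, (⨅ j, ‖x - b j‖) ^ r ∂P with hG
    have hu : Continuous fun y : E => Function.update a i y := by
      refine continuous_pi fun j => ?_
      by_cases hj : j = i
      · subst hj; simp only [Function.update_self]; exact continuous_id
      · simpa [Function.update_of_ne hj] using (continuous_const : Continuous fun _ : E => a j)
    have hua : Function.update a i (a i) = a := Function.update_eq_self i a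
    have htend : Filter.Tendsto (fun y : E => Function.update a i y) (nhds (a i)) (nhds a) := by
      have h0 := hu.continuousAt (x := a i)
      rwa [ContinuousAt, hua] at h0
    have hev : ∀ᶠ y in nhds (a i), G a ≤ G (Function.update a i y) := by
      have h0 : ∀ᶠ b in nhds a, G a ≤ G b := hmin
      exact htend.eventually h0
    refine hev.mono fun y hy => ?_
    -- split the integrals over C and Cᶜ
    have hsplit : ∀ b : Fin n → E,
        G b = (∫ x in C, g b x ∂P) + ∫ x in Cᶜ, g b x ∂P :=
      fun b => (integral_add_compl hC (hgint b)).symm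
    have e1 : (∫ x in C, g a x ∂P) = f (a i) :=
      setIntegral_congr_fun hC hgCeq
    have e2 : (∫ x in C, g (Function.update a i y) x ∂P) ≤ f y := by
      refine setIntegral_mono_on ((hgint _).integrableOn) ((hinty y).integrableOn) hC
        fun x _ => ?_
      have h1 : (⨅ j, ‖x - Function.update a i y j‖) ≤ ‖x - y‖ := by
        have := hiInf_le (Function.update a i y) x i
        rwa [Function.update_self] at this
      exact Real.rpow_le_rpow (hiInf_nonneg _ x) h1 hr0
    have e3 : (∫ x in Cᶜ, g (Function.update a i y) x ∂P) ≤ ∫ x in Cᶜ, g a x ∂P :=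
      setIntegral_mono_on ((hgint _).integrableOn) ((hgint a).integrableOn) hC.compl
        fun x hx => hout x hx y
    have hGa := hsplit a
    have hGb := hsplit (Function.update a i y)
    rw [hGa, hGb, e1] at hy
    linarith
  -- f is convex
  have hconv : ConvexOn ℝ Set.univ f := by
    refine ⟨convex_univ, fun y _ z _ s t hs ht hst => ?_⟩
    have hpt : ∀ x : E, ‖x - (s • y + t • z)‖ ^ r ≤ s * ‖x - y‖ ^ r + t * ‖x - z‖ ^ r := by
      intro x
      have hx1 : x - (s • y + t • z) = s • (x - y) + t • (x - z) := by
        have hx0 : s • x + t • x = x := by rw [← add_smul, hst, one_smul]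
        calc x - (s • y + t • z) = (s • x + t • x) - (s • y + t • z) := by rw [hx0]
          _ = s • (x - y) + t • (x - z) := by rw [smul_sub, smul_sub]; abel
      have h2 : ‖x - (s • y + t • z)‖ ≤ s * ‖x - y‖ + t * ‖x - z‖ := by
        rw [hx1]
        refine (norm_add_le _ _).trans ?_
        rw [norm_smul, norm_smul, Real.norm_of_nonneg hs, Real.norm_of_nonneg ht]
      calc ‖x - (s • y + t • z)‖ ^ r ≤ (s * ‖x - y‖ + t * ‖x - z‖) ^ r :=
            Real.rpow_le_rpow (norm_nonneg _) h2 hr0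
        _ ≤ s * ‖x - y‖ ^ r + t * ‖x - z‖ ^ r := by
            have := (convexOn_rpow hr).2 (Set.mem_Ici.mpr (norm_nonneg (x - y)))
              (Set.mem_Ici.mpr (norm_nonneg (x - z))) hs ht hst
            simpa [smul_eq_mul] using this
    have hint1 : IntegrableOn (fun x => ‖x - (s • y + t • z)‖ ^ r) C P :=
      (hinty _).integrableOn
    have hint2 : IntegrableOn (fun x => s * ‖x - y‖ ^ r + t * ‖x - z‖ ^ r) C P :=
      (((hinty y).integrableOn.const_mul s).add ((hinty z).integrableOn.const_mul t))
    calc f (s • y + t • z) ≤ ∫ x in C, (s * ‖x - y‖ ^ r + t * ‖x - z‖ ^ r) ∂P :=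
          setIntegral_mono_on hint1 hint2 hC fun x _ => hpt x
      _ = s * f y + t * f z := by
          rw [integral_add ((hinty y).integrableOn.const_mul s)
            ((hinty z).integrableOn.const_mul t), integral_const_mul, integral_const_mul]
      _ = s • f y + t • f z := by simp [smul_eq_mul]
  -- conclude: local min of convex function is global min
  intro y
  exact IsMinOn.of_isLocalMin_of_convex_univ hlocal hconv y
end

section
/- Suppose a = (a_1,...,a_n) with pairwise distinct components, and suppose for some i there exist a Borel set C with W_{a_i}(Γ) ⊆ C ⊆ V_{a_i}(Γ) and a point z ∈ E with ∫_C ‖x - z‖^r dP(x) < ∫_C ‖x - a_i‖^r dP(x), where r ≥ 1. Then a is not a local minimum of the L^r-distortion function G. (Key step: along the segment y_s = s z + (1-s) a_i, convexity of the one-point distortion on C gives ∫_C ‖x - y_s‖^r dP(x) < ∫_C ‖x - a_i‖^r dP(x) for all s ∈ (0,1], and replacing a_i by y_s strictly decreases G.) -/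
open MeasureTheory EMetric

/-- If some component `a i` can be strictly improved on a set `C` squeezed between its
open and closed Voronoi cells, then `a` is not a local minimum of the `L^r`-distortion. -/
theorem not_local_min_of_improvable_component
    {E : Type*} [NormedAddCommGroup E] [NormedSpace ℝ E] [CompleteSpace E]
    [SecondCountableTopology E] [MeasurableSpace E] [BorelSpace E]
    (P : Measure E) [IsProbabilityMeasure P]
    (r : ℝ) (hr : 1 ≤ r) (hint : Integrable (fun x => ‖x‖ ^ r) P)
    (n : ℕ) (hn : 0 < n) (a : Fin n → E) (ha : Function.Injective a)
    (i : Fin n) (C : Set E) (hC : MeasurableSet C)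
    (hWC : {x : E | edist x (a i) < infEdist x (Set.range a \ {a i})} ⊆ C)
    (hCV : C ⊆ {x : E | edist x (a i) = infEdist x (Set.range a)})
    (z : E) (hz : ∫ x in C, ‖x - z‖ ^ r ∂P < ∫ x in C, ‖x - a i‖ ^ r ∂P) :
    ¬ IsLocalMin (fun b : Fin n → E => ∫ x, (⨅ j, ‖x - b j‖) ^ r ∂P) a := by
  intro hmin
  haveI : Nonempty (Fin n) := ⟨⟨0, hn⟩⟩
  have hr0 : (0:ℝ) ≤ r := le_trans zero_le_one hr
  set G : (Fin n → E) → ℝ := fun b => ∫ x, (⨅ j, ‖x - b j‖) ^ r ∂P with hGdef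
  have hbdd : ∀ (b : Fin n → E) (x : E), BddBelow (Set.range fun j => ‖x - b j‖) :=
    fun b x => ⟨0, by rintro y ⟨j, rfl⟩; positivity⟩
  have hinf_nonneg : ∀ (b : Fin n → E) (x : E), 0 ≤ ⨅ j, ‖x - b j‖ :=
    fun b x => le_ciInf fun j => norm_nonneg _
  -- integrability of single-point distortions
  have hint_c : ∀ c : E, Integrable (fun x => ‖x - c‖ ^ r) P := by
    intro c
    have hmeas : AEStronglyMeasurable (fun x => ‖x - c‖ ^ r) P :=
      (((continuous_id.sub continuous_const).norm).rpow_const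
        (fun x => Or.inr hr0)).aestronglyMeasurable
    have hintb : Integrable (fun x : E => 2 ^ r * ‖x‖ ^ r + 2 ^ r * ‖c‖ ^ r) P :=
      (hint.const_mul _).add (integrable_const _)
    refine hintb.mono' hmeas (ae_of_all _ fun x => ?_)
    rw [Real.norm_of_nonneg (Real.rpow_nonneg (norm_nonneg _) r)]
    have h1 : ‖x - c‖ ^ r ≤ (‖x‖ + ‖c‖) ^ r :=
      Real.rpow_le_rpow (norm_nonneg _) (norm_sub_le _ _) hr0
    have h2 : (‖x‖ + ‖c‖ : ℝ) ^ r ≤ (2 * max ‖x‖ ‖c‖) ^ r := by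
      refine Real.rpow_le_rpow (by positivity) ?_ hr0
      rcases le_total ‖x‖ ‖c‖ with h | h
      · rw [max_eq_right h]; linarith
      · rw [max_eq_left h]; linarith
    have h3 : (2 * max ‖x‖ ‖c‖ : ℝ) ^ r = 2 ^ r * (max ‖x‖ ‖c‖) ^ r :=
      Real.mul_rpow (by norm_num) (by positivity)
    have h4 : (max ‖x‖ ‖c‖ : ℝ) ^ r ≤ ‖x‖ ^ r + ‖c‖ ^ r := by
      rcases max_cases ‖x‖ ‖c‖ with ⟨h, _⟩ | ⟨h, _⟩ <;> rw [h] <;>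
        [nlinarith [Real.rpow_nonneg (norm_nonneg c) r];
         nlinarith [Real.rpow_nonneg (norm_nonneg x) r]]
    calc ‖x - c‖ ^ r ≤ (2 * max ‖x‖ ‖c‖) ^ r := h1.trans h2
    _ = 2 ^ r * (max ‖x‖ ‖c‖) ^ r := h3
    _ ≤ 2 ^ r * ‖x‖ ^ r + 2 ^ r * ‖c‖ ^ r := by
        have : (0:ℝ) ≤ 2 ^ r := Real.rpow_nonneg (by norm_num) r
        nlinarith [h4]
  have hmeas_inf : ∀ b : Fin n → E, Measurable fun x => (⨅ j, ‖x - b j‖) ^ r := by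
    intro b
    exact (Real.continuous_rpow_const hr0).measurable.comp
      (Measurable.iInf fun j => ((continuous_id.sub continuous_const).norm).measurable)
  have hint_inf : ∀ b : Fin n → E, Integrable (fun x => (⨅ j, ‖x - b j‖) ^ r) P := by
    intro b
    refine (hint_c (b ⟨0, hn⟩)).mono' (hmeas_inf b).aestronglyMeasurable
      (ae_of_all _ fun x => ?_)
    rw [Real.norm_of_nonneg (Real.rpow_nonneg (hinf_nonneg b x) r)]
    exact Real.rpow_le_rpow (hinf_nonneg b x) (ciInf_le (hbdd b x) _) hr0
  -- on C the nearest point is a i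
  have hC1 : ∀ x ∈ C, (⨅ j, ‖x - a j‖) = ‖x - a i‖ := by
    intro x hx
    have hxV := hCV hx
    have hle : ∀ j, ‖x - a i‖ ≤ ‖x - a j‖ := by
      intro j
      have h1 : edist x (a i) ≤ edist x (a j) :=
        hxV.le.trans (infEdist_le_edist_of_mem (Set.mem_range_self j))
      rw [edist_dist, edist_dist] at h1
      have := (ENNReal.ofReal_le_ofReal_iff dist_nonneg).mp h1
      rwa [dist_eq_norm, dist_eq_norm] at this
    exact le_antisymm (ciInf_le (hbdd a x) i) (le_ciInf hle)
  -- choose s ∈ (0,1) close to 0 along the path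
  set σ : ℝ → (Fin n → E) := fun s => Function.update a i (a i + s • (z - a i)) with hσdef
  have hσcont : Continuous σ := by
    refine continuous_pi fun j => ?_
    by_cases hj : j = i
    · subst hj
      simp only [hσdef, Function.update_self]
      fun_prop
    · simp only [hσdef, Function.update_of_ne hj]
      exact continuous_const
  have hσ0 : σ 0 = a := by
    simp [hσdef, Function.update_eq_self]
  have htend : Filter.Tendsto σ (nhds 0) (nhds a) := by
    simpa [hσ0] using hσcont.tendsto 0
  have hev : ∀ᶠ s in nhds (0:ℝ), G a ≤ G (σ s) := htend.eventually hmin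
  obtain ⟨s, hGs, hs0, hs1⟩ : ∃ s : ℝ, G a ≤ G (σ s) ∧ 0 < s ∧ s < 1 := by
    have h1 : Set.Ioo (0:ℝ) 1 ∈ nhdsWithin (0:ℝ) (Set.Ioi 0) :=
      Ioo_mem_nhdsGT_of_mem ⟨le_refl 0, one_pos⟩
    have h2 : ∀ᶠ s in nhdsWithin (0:ℝ) (Set.Ioi 0), G a ≤ G (σ s) :=
      hev.filter_mono nhdsWithin_le_nhds
    obtain ⟨s, hsG, hs⟩ := (h2.and (Filter.eventually_of_mem h1 fun x hx => hx)).exists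
    exact ⟨s, hsG, hs.1, hs.2⟩
  set y : E := a i + s • (z - a i) with hydef
  set b : Fin n → E := σ s with hbdef
  have hbi : b i = y := by simp [hbdef, hσdef, hydef]
  have hbj : ∀ j, j ≠ i → b j = a j := fun j hj => by
    simp [hbdef, hσdef, Function.update_of_ne hj]
  -- pointwise bound on Cᶜ
  have hC2 : ∀ x ∈ Cᶜ, (⨅ j, ‖x - b j‖) ≤ ⨅ j, ‖x - a j‖ := by
    intro x hx
    have hxW : ¬ edist x (a i) < infEdist x (Set.range a \ {a i}) := fun h => hx (hWC h)
    push_neg at hxW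
    have hSne : (Set.range a \ {a i}).Nonempty := by
      by_contra h
      rw [Set.not_nonempty_iff_eq_empty] at h
      rw [h, show infEdist x (∅ : Set E) = ⊤ from Metric.infEDist_empty] at hxW
      exact (edist_lt_top x (a i)).ne (top_le_iff.mp hxW)
    have hScpt : IsCompact (Set.range a \ {a i}) :=
      ((Set.finite_range a).diff).isCompact
    obtain ⟨w, hwS, hw⟩ := hScpt.exists_infEdist_eq_edist hSne x
    obtain ⟨⟨j₀, rfl⟩, hwne⟩ := hwS
    have hj₀ : j₀ ≠ i := fun h => hwne (by rw [h]; rfl)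
    have hkey : ∀ j, ‖x - a j₀‖ ≤ ‖x - a j‖ := by
      intro j
      have h1 : edist x (a j₀) ≤ edist x (a j) := by
        by_cases hj : j = i
        · subst hj; exact hw ▸ hxW
        · refine hw ▸ infEdist_le_edist_of_mem ⟨Set.mem_range_self j, ?_⟩
          simp only [Set.mem_singleton_iff]
          exact fun h => hj (ha h)
      rw [edist_dist, edist_dist] at h1
      have := (ENNReal.ofReal_le_ofReal_iff dist_nonneg).mp h1
      rwa [dist_eq_norm, dist_eq_norm] at this
    calc (⨅ j, ‖x - b j‖) ≤ ‖x - b j₀‖ := ciInf_le (hbdd b x) j₀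
    _ = ‖x - a j₀‖ := by rw [hbj j₀ hj₀]
    _ ≤ ⨅ j, ‖x - a j‖ := le_ciInf hkey
  -- convexity bound on C
  have hconv : ∀ x : E, ‖x - y‖ ^ r ≤ (1 - s) * ‖x - a i‖ ^ r + s * ‖x - z‖ ^ r := by
    intro x
    have hxy : x - y = (1 - s) • (x - a i) + s • (x - z) := by
      simp only [hydef]
      module
    have h1 : ‖x - y‖ ≤ (1 - s) * ‖x - a i‖ + s * ‖x - z‖ := by
      rw [hxy]
      refine (norm_add_le _ _).trans ?_
      rw [norm_smul, norm_smul, Real.norm_of_nonneg (by linarith), Real.norm_of_nonneg hs0.le]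
    have h2 : ‖x - y‖ ^ r ≤ ((1 - s) * ‖x - a i‖ + s * ‖x - z‖) ^ r :=
      Real.rpow_le_rpow (norm_nonneg _) h1 hr0
    refine h2.trans ?_
    have := (convexOn_rpow hr).2 (Set.mem_Ici.mpr (norm_nonneg (x - a i)))
      (Set.mem_Ici.mpr (norm_nonneg (x - z))) (by linarith : (0:ℝ) ≤ 1 - s) hs0.le
      (by ring : (1 - s) + s = 1)
    simpa [smul_eq_mul] using this
  -- integral comparison
  have hsplit_b : G b = (∫ x in C, (⨅ j, ‖x - b j‖) ^ r ∂P)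
      + ∫ x in Cᶜ, (⨅ j, ‖x - b j‖) ^ r ∂P :=
    (integral_add_compl hC (hint_inf b)).symm
  have hsplit_a : G a = (∫ x in C, (⨅ j, ‖x - a j‖) ^ r ∂P)
      + ∫ x in Cᶜ, (⨅ j, ‖x - a j‖) ^ r ∂P :=
    (integral_add_compl hC (hint_inf a)).symm
  have step1 : (∫ x in C, (⨅ j, ‖x - b j‖) ^ r ∂P) ≤ ∫ x in C, ‖x - y‖ ^ r ∂P := by
    refine setIntegral_mono_on (hint_inf b).integrableOn (hint_c y).integrableOn hC
      fun x _ => ?_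
    refine Real.rpow_le_rpow (hinf_nonneg b x) ?_ hr0
    calc (⨅ j, ‖x - b j‖) ≤ ‖x - b i‖ := ciInf_le (hbdd b x) i
    _ = ‖x - y‖ := by rw [hbi]
  have step2 : (∫ x in C, ‖x - y‖ ^ r ∂P)
      ≤ (1 - s) * (∫ x in C, ‖x - a i‖ ^ r ∂P) + s * ∫ x in C, ‖x - z‖ ^ r ∂P := by
    have hrhs : Integrable (fun x => (1 - s) * ‖x - a i‖ ^ r + s * ‖x - z‖ ^ r)
        (P.restrict C) :=
      (((hint_c (a i)).restrict (s := C)).const_mul _).add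
        (((hint_c z).restrict (s := C)).const_mul _)
    have := setIntegral_mono_on (hint_c y).integrableOn hrhs hC fun x _ => hconv x
    rwa [integral_add (((hint_c (a i)).restrict (s := C)).const_mul _)
      (((hint_c z).restrict (s := C)).const_mul _), integral_const_mul, integral_const_mul]
      at this
  have step3 : (1 - s) * (∫ x in C, ‖x - a i‖ ^ r ∂P) + s * (∫ x in C, ‖x - z‖ ^ r ∂P)
      < ∫ x in C, ‖x - a i‖ ^ r ∂P := by
    nlinarith [mul_lt_mul_of_pos_left hz hs0]
  have step4 : (∫ x in Cᶜ, (⨅ j, ‖x - b j‖) ^ r ∂P)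
      ≤ ∫ x in Cᶜ, (⨅ j, ‖x - a j‖) ^ r ∂P := by
    refine setIntegral_mono_on (hint_inf b).integrableOn (hint_inf a).integrableOn
      hC.compl fun x hx => ?_
    exact Real.rpow_le_rpow (hinf_nonneg b x) (hC2 x hx) hr0
  have step5 : (∫ x in C, ‖x - a i‖ ^ r ∂P) = ∫ x in C, (⨅ j, ‖x - a j‖) ^ r ∂P := by
    refine setIntegral_congr_fun hC fun x hx => ?_
    rw [hC1 x hx]
  have : G b < G a := by
    rw [hsplit_b, hsplit_a]
    calc (∫ x in C, (⨅ j, ‖x - b j‖) ^ r ∂P) + ∫ x in Cᶜ, (⨅ j, ‖x - b j‖) ^ r ∂P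
        ≤ (∫ x in C, ‖x - y‖ ^ r ∂P) + ∫ x in Cᶜ, (⨅ j, ‖x - a j‖) ^ r ∂P :=
          add_le_add step1 step4
    _ ≤ ((1 - s) * (∫ x in C, ‖x - a i‖ ^ r ∂P) + s * ∫ x in C, ‖x - z‖ ^ r ∂P)
          + ∫ x in Cᶜ, (⨅ j, ‖x - a j‖) ^ r ∂P := add_le_add_left step2 _
    _ < (∫ x in C, ‖x - a i‖ ^ r ∂P) + ∫ x in Cᶜ, (⨅ j, ‖x - a j‖) ^ r ∂P :=
          add_lt_add_left step3 _
    _ = (∫ x in C, (⨅ j, ‖x - a j‖) ^ r ∂P) + ∫ x in Cᶜ, (⨅ j, ‖x - a j‖) ^ r ∂P := by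
          rw [step5]
  exact absurd hGs (not_le.mpr this)
end

section
/- Let Γ ⊂ E be a finite quantizer, c ∈ E \ Γ, and Γ₁ = Γ ∪ {c}. If P(W_c(Γ₁)) > 0, where W_c(Γ₁) is the open Voronoi cell of c induced by Γ₁, then ∫ d(x, Γ₁)^r dP(x) < ∫ d(x, Γ)^r dP(x) for every r ∈ (0,∞). -/
open MeasureTheory Metric

private lemma add_rpow_le {r a b : ℝ} (hr : 0 < r) (ha : 0 ≤ a) (hb : 0 ≤ b) :
    (a + b) ^ r ≤ 2 ^ r * a ^ r + 2 ^ r * b ^ r := by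
  have h1 : a + b ≤ 2 * max a b := by
    rcases le_total a b with h | h
    · simp [max_eq_right h]; linarith
    · simp [max_eq_left h]; linarith
  have h0 : (0:ℝ) ≤ max a b := le_max_of_le_left ha
  calc (a + b) ^ r ≤ (2 * max a b) ^ r :=
        Real.rpow_le_rpow (by linarith) h1 hr.le
    _ = 2 ^ r * (max a b) ^ r := Real.mul_rpow (by norm_num) h0
    _ ≤ 2 ^ r * (a ^ r + b ^ r) := by
        apply mul_le_mul_of_nonneg_left _ (Real.rpow_nonneg (by norm_num) r)
        rcases le_total a b with h | h
        · rw [max_eq_right h]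
          nlinarith [Real.rpow_nonneg ha r]
        · rw [max_eq_left h]
          nlinarith [Real.rpow_nonneg hb r]
    _ = 2 ^ r * a ^ r + 2 ^ r * b ^ r := by ring

private lemma integrable_infDist_rpow
    {E : Type*} [NormedAddCommGroup E] [NormedSpace ℝ E]
    [MeasurableSpace E] [BorelSpace E]
    (P : Measure E) [IsProbabilityMeasure P]
    {r : ℝ} (hr : 0 < r) (hint : Integrable (fun x => ‖x‖ ^ r) P)
    {S : Set E} {a : E} (ha : a ∈ S) :
    Integrable (fun x => (infDist x S) ^ r) P := by
  have hmeas : AEStronglyMeasurable (fun x => (infDist x S) ^ r) P :=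
    ((continuous_infDist_pt S).rpow_const (fun x => Or.inr hr.le)).aestronglyMeasurable
  have hbound : Integrable (fun x => 2 ^ r * ‖x‖ ^ r + 2 ^ r * ‖a‖ ^ r) P :=
    (hint.const_mul _).add (integrable_const _)
  refine hbound.mono' hmeas ?_
  filter_upwards with x
  have h1 : infDist x S ≤ ‖x - a‖ := by
    simpa [dist_eq_norm] using infDist_le_dist_of_mem ha
  have h2 : ‖x - a‖ ≤ ‖x‖ + ‖a‖ := norm_sub_le x a
  have h3 : (infDist x S) ^ r ≤ (‖x‖ + ‖a‖) ^ r :=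
    Real.rpow_le_rpow infDist_nonneg (h1.trans h2) hr.le
  have h4 := add_rpow_le hr (norm_nonneg x) (norm_nonneg a)
  rw [Real.norm_of_nonneg (Real.rpow_nonneg infDist_nonneg r)]
  linarith

/-- Adding to a finite quantizer `Γ` a point `c ∉ Γ` whose open Voronoi cell in
`Γ ∪ {c}` has positive `P`-measure strictly decreases the `L^r`-distortion. -/
theorem distortion_strict_decrease_of_added_point
    {E : Type*} [NormedAddCommGroup E] [NormedSpace ℝ E] [CompleteSpace E]
    [MeasurableSpace E] [BorelSpace E]
    (P : Measure E) [IsProbabilityMeasure P]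
    (r : ℝ) (hr : 0 < r) (hint : Integrable (fun x => ‖x‖ ^ r) P)
    (Γ : Set E) (hΓ : Γ.Finite) (hne : Γ.Nonempty)
    (c : E) (hc : c ∉ Γ)
    (hW : 0 < P {x : E | ‖x - c‖ < infDist x Γ}) :
    ∫ x, (infDist x (Γ ∪ {c})) ^ r ∂P < ∫ x, (infDist x Γ) ^ r ∂P := by
  obtain ⟨a, ha⟩ := hne
  set f : E → ℝ := fun x => (infDist x (Γ ∪ {c})) ^ r with hf
  set g : E → ℝ := fun x => (infDist x Γ) ^ r with hg
  have hfi : Integrable f P := integrable_infDist_rpow P hr hint (Set.mem_union_left _ ha)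
  have hgi : Integrable g P := integrable_infDist_rpow P hr hint ha
  have hle : ∀ x, f x ≤ g x := fun x =>
    Real.rpow_le_rpow infDist_nonneg
      (infDist_le_infDist_of_subset Set.subset_union_left ⟨a, ha⟩) hr.le
  have hsub : {x : E | ‖x - c‖ < infDist x Γ} ⊆ Function.support (fun x => g x - f x) := by
    intro x hx
    have h1 : infDist x (Γ ∪ {c}) ≤ ‖x - c‖ := by
      have := infDist_le_dist_of_mem (s := Γ ∪ {c}) (x := x) (Set.mem_union_right Γ rfl)
      rwa [dist_eq_norm] at this
    have h2 : f x < g x :=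
      Real.rpow_lt_rpow infDist_nonneg (lt_of_le_of_lt h1 hx) hr
    simp only [Function.mem_support]
    exact sub_ne_zero_of_ne h2.ne'
  have hpos : 0 < ∫ x, (g x - f x) ∂P := by
    rw [integral_pos_iff_support_of_nonneg (fun x => sub_nonneg.2 (hle x)) (hgi.sub hfi)]
    exact lt_of_lt_of_le hW (measure_mono hsub)
  rw [integral_sub hgi hfi] at hpos
  linarith
end

section
/- Let E be a real Hilbert space and P a Borel probability measure on E with convex support K = supp(P) and ∫‖x‖^r dP < ∞. If G_{r,n} has a strict local minimum at a = (a_1,...,a_n) ∈ E^n, then a_i ∈ K for every i ∈ {1,...,n}. -/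
open MeasureTheory
open scoped RealInnerProductSpace

section aux

variable {E : Type*} [TopologicalSpace E] [MeasurableSpace E] (P : Measure E)

lemma measureSupport_compl_null [SecondCountableTopology E] :
    P (measureSupport P)ᶜ = 0 := by
  have hsub : (measureSupport P)ᶜ ⊆ ⋃₀ {U : Set E | IsOpen U ∧ P U = 0} := by
    intro x hx
    simp only [measureSupport, Set.mem_compl_iff, Set.mem_setOf_eq, not_forall] at hx
    obtain ⟨U, hUo, hxU, hUP⟩ := hx
    exact ⟨U, ⟨hUo, by simpa using (not_lt.1 hUP)⟩, hxU⟩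
  obtain ⟨T, hTc, hTsub, hTeq⟩ := TopologicalSpace.isOpen_sUnion_countable
    {U : Set E | IsOpen U ∧ P U = 0} (fun s hs => hs.1)
  have : P (⋃₀ {U : Set E | IsOpen U ∧ P U = 0}) = 0 := by
    rw [← hTeq]
    exact (measure_sUnion_null_iff hTc).2 fun s hs => (hTsub hs).2
  exact measure_mono_null hsub this

lemma measureSupport_isClosed : IsClosed (measureSupport P) := by
  rw [← isOpen_compl_iff]
  rw [isOpen_iff_forall_mem_open]
  intro x hx
  simp only [measureSupport, Set.mem_compl_iff, Set.mem_setOf_eq, not_forall] at hx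
  obtain ⟨U, hUo, hxU, hUP⟩ := hx
  refine ⟨U, fun y hy => ?_, hUo, hxU⟩
  simp only [measureSupport, Set.mem_compl_iff, Set.mem_setOf_eq, not_forall]
  exact ⟨U, hUo, hy, hUP⟩

end aux

/-- Hilbert setting: if `supp(P)` is convex and the `L^r`-distortion has a strict
local minimum at `a`, then every component `a i` lies in `supp(P)`. -/
theorem strict_local_min_components_in_support
    {E : Type*} [NormedAddCommGroup E] [InnerProductSpace ℝ E] [CompleteSpace E]
    [SecondCountableTopology E] [MeasurableSpace E] [BorelSpace E]
    (P : Measure E) [IsProbabilityMeasure P]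
    (r : ℝ) (hr : 0 < r) (hint : Integrable (fun x => ‖x‖ ^ r) P)
    (hconv : Convex ℝ (measureSupport P))
    (n : ℕ) (hn : 0 < n) (a : Fin n → E)
    (hmin : ∃ U ∈ nhds a, ∀ b ∈ U, b ≠ a →
      (∫ x, (⨅ i, ‖x - a i‖) ^ r ∂P) < ∫ x, (⨅ i, ‖x - b i‖) ^ r ∂P) :
    ∀ i, a i ∈ measureSupport P := by
  haveI : NeZero n := ⟨hn.ne'⟩
  obtain ⟨U, hU, hUmin⟩ := hmin
  set K := measureSupport P with hKdef
  have hKclosed : IsClosed K := measureSupport_isClosed P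
  have hKnull : P Kᶜ = 0 := measureSupport_compl_null P
  have hKne : K.Nonempty := by
    rcases Set.eq_empty_or_nonempty K with h | h
    · exfalso
      have : P Kᶜ = 1 := by rw [h]; simp
      rw [hKnull] at this; exact zero_ne_one this
    · exact h
  intro i
  by_contra hai
  obtain ⟨p, hpK, hproj⟩ :=
    exists_norm_eq_iInf_of_complete_convex hKne hKclosed.isComplete hconv (a i)
  have hprojle : ∀ w ∈ K, ⟪a i - p, w - p⟫ ≤ 0 :=
    (norm_eq_iInf_iff_real_inner_le_zero hconv hpK).1 hproj
  have hap : a i ≠ p := fun h => hai (h ▸ hpK)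
  -- choose a small t > 0 so that the perturbed point is in U
  have hcont : Filter.Tendsto (fun t : ℝ => Function.update a i (a i + t • (p - a i)))
      (nhds 0) (nhds a) := by
    have hc : Continuous fun t : ℝ => Function.update a i (a i + t • (p - a i)) := by
      apply continuous_pi
      intro j
      by_cases hj : j = i
      · subst hj
        simp only [Function.update_self]
        exact continuous_const.add (continuous_id.smul continuous_const)
      · simp only [Function.update_of_ne hj]
        exact continuous_const
    have h0 : Function.update a i (a i + (0:ℝ) • (p - a i)) = a := by
      simp [Function.update_eq_self]
    simpa [h0] using hc.tendsto 0
  have hev : ∀ᶠ t : ℝ in nhds 0, Function.update a i (a i + t • (p - a i)) ∈ U :=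
    hcont.eventually_mem hU
  obtain ⟨δ, hδ, hball⟩ := Metric.eventually_nhds_iff.1 hev
  set t : ℝ := min (δ / 2) 1 with ht
  have ht0 : 0 < t := lt_min (by linarith) one_pos
  have ht1 : t ≤ 1 := min_le_right _ _
  have htδ : dist t 0 < δ := by
    rw [Real.dist_eq, sub_zero, abs_of_pos ht0]
    exact lt_of_le_of_lt (min_le_left _ _) (by linarith)
  set b := Function.update a i (a i + t • (p - a i)) with hb
  have hbU : b ∈ U := hball htδ
  have hbne : b ≠ a := by
    intro h
    have : b i = a i := by rw [h]
    rw [hb, Function.update_self] at this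
    have : t • (p - a i) = 0 := by
      have := congrArg (· - a i) this
      simpa using this
    rcases smul_eq_zero.1 this with h1 | h1
    · exact ht0.ne' h1
    · exact hap (by rw [sub_eq_zero] at h1; exact h1.symm)
  have hlt := hUmin b hbU hbne
  -- the key pointwise inequality on K
  have hptwise : ∀ x ∈ K, ‖x - b i‖ ≤ ‖x - a i‖ := by
    intro x hx
    have hinner : ‖p - a i‖ ^ 2 ≤ ⟪x - a i, p - a i⟫ := by
      have h1 : ⟪a i - p, x - p⟫ ≤ 0 := hprojle x hx
      have : ⟪x - a i, p - a i⟫ = ⟪x - p, p - a i⟫ + ‖p - a i‖ ^ 2 := by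
        have : x - a i = (x - p) + (p - a i) := by abel
        rw [this, inner_add_left, real_inner_self_eq_norm_sq]
      rw [this]
      have h2 : 0 ≤ ⟪x - p, p - a i⟫ := by
        have : ⟪x - p, p - a i⟫ = - ⟪a i - p, x - p⟫ := by
          rw [real_inner_comm]
          rw [show p - a i = -(a i - p) by abel, inner_neg_left]
        rw [this]; linarith
      linarith
    have hsq : ‖x - b i‖ ^ 2 ≤ ‖x - a i‖ ^ 2 := by
      have hbi : x - b i = (x - a i) - t • (p - a i) := by
        rw [hb, Function.update_self]; abel
      rw [hbi, norm_sub_sq_real, real_inner_smul_right, norm_smul,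
        Real.norm_eq_abs, abs_of_pos ht0, mul_pow]
      have h3 : t ^ 2 * ‖p - a i‖ ^ 2 ≤ t * ‖p - a i‖ ^ 2 := by
        have : t ^ 2 ≤ t := by nlinarith
        nlinarith [sq_nonneg ‖p - a i‖]
      nlinarith
    exact (pow_le_pow_iff_left₀ (norm_nonneg _) (norm_nonneg _) two_ne_zero).1 hsq
  -- integrability of the reference function
  have hbdd : ∀ (c : Fin n → E) (x : E), BddBelow (Set.range fun j => ‖x - c j‖) :=
    fun c x => ⟨0, by rintro _ ⟨j, rfl⟩; exact norm_nonneg _⟩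
  have hiInf_nonneg : ∀ (c : Fin n → E) (x : E), 0 ≤ ⨅ j, ‖x - c j‖ :=
    fun c x => le_ciInf fun j => norm_nonneg _
  have hcont_inf : ∀ c : Fin n → E, Continuous fun x => (⨅ j, ‖x - c j‖ : ℝ) := by
    intro c
    have h1 : ∀ x : E, (⨅ j, ‖x - c j‖ : ℝ) =
        (Finset.univ : Finset (Fin n)).inf' Finset.univ_nonempty (fun j => ‖x - c j‖) := by
      intro x; rw [Finset.inf'_univ_eq_ciInf]
    simp only [h1]
    exact Continuous.finset_inf'_apply _ fun j _ =>
      (continuous_id.sub continuous_const).norm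
  have hmeas : ∀ c : Fin n → E,
      AEStronglyMeasurable (fun x => (⨅ j, ‖x - c j‖) ^ r) P := by
    intro c
    exact ((hcont_inf c).rpow_const (fun x => Or.inr hr.le)).aestronglyMeasurable
  have hinta : Integrable (fun x => (⨅ j, ‖x - a j‖) ^ r) P := by
    have hg : Integrable (fun x => (2:ℝ) ^ r * (‖x‖ ^ r + ‖a i‖ ^ r)) P :=
      ((hint.add (integrable_const _)).const_mul _)
    refine hg.mono (hmeas a) ?_
    filter_upwards with x
    have h1 : (⨅ j, ‖x - a j‖) ≤ ‖x - a i‖ := ciInf_le (hbdd a x) i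
    have h2 : ‖x - a i‖ ≤ ‖x‖ + ‖a i‖ := norm_sub_le _ _
    have h3 : (⨅ j, ‖x - a j‖) ^ r ≤ (‖x‖ + ‖a i‖) ^ r :=
      Real.rpow_le_rpow (hiInf_nonneg a x) (h1.trans h2) hr.le
    have h4 : (‖x‖ + ‖a i‖) ^ r ≤ (2:ℝ) ^ r * (‖x‖ ^ r + ‖a i‖ ^ r) := by
      have hmax : ‖x‖ + ‖a i‖ ≤ 2 * max ‖x‖ ‖a i‖ := by
        rw [two_mul]
        exact add_le_add (le_max_left _ _) (le_max_right _ _)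
      have h5 : (‖x‖ + ‖a i‖) ^ r ≤ (2 * max ‖x‖ ‖a i‖) ^ r :=
        Real.rpow_le_rpow (by positivity) hmax hr.le
      rw [Real.mul_rpow (by norm_num) (le_max_of_le_left (norm_nonneg _))] at h5
      refine h5.trans ?_
      have h6 : (max ‖x‖ ‖a i‖) ^ r ≤ ‖x‖ ^ r + ‖a i‖ ^ r := by
        rcases max_cases ‖x‖ ‖a i‖ with ⟨h, _⟩ | ⟨h, _⟩ <;> rw [h]
        · nlinarith [Real.rpow_nonneg (norm_nonneg (a i)) r]
        · nlinarith [Real.rpow_nonneg (norm_nonneg x) r]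
      have h2r : (0:ℝ) ≤ (2:ℝ) ^ r := Real.rpow_nonneg (by norm_num) r
      nlinarith
    rw [Real.norm_eq_abs, abs_of_nonneg (Real.rpow_nonneg (hiInf_nonneg a x) r)]
    calc (⨅ j, ‖x - a j‖) ^ r ≤ (2:ℝ) ^ r * (‖x‖ ^ r + ‖a i‖ ^ r) := h3.trans h4
      _ ≤ ‖(2:ℝ) ^ r * (‖x‖ ^ r + ‖a i‖ ^ r)‖ := le_abs_self _
  -- the integral inequality contradicting strictness
  have key : (∫ x, (⨅ j, ‖x - b j‖) ^ r ∂P) ≤ ∫ x, (⨅ j, ‖x - a j‖) ^ r ∂P := by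
    apply integral_mono_of_nonneg
    · filter_upwards with x
      exact Real.rpow_nonneg (hiInf_nonneg b x) r
    · exact hinta
    · have hKae : ∀ᵐ x ∂P, x ∈ K := by
        rw [ae_iff]
        exact hKnull
      filter_upwards [hKae] with x hx
      refine Real.rpow_le_rpow (hiInf_nonneg b x) ?_ hr.le
      apply ciInf_mono (hbdd b x)
      intro j
      by_cases hj : j = i
      · subst hj; exact hptwise x hx
      · rw [hb, Function.update_of_ne hj]
  exact absurd hlt (not_lt.2 key)
end

section
/- Let E be a real Hilbert space, K ⊂ E nonempty closed convex, a ∉ K, b the projection of a onto K, and y_s = s b + (1-s) a for s ∈ (0,1]. Then for every r ∈ (0,∞) and every probability measure P supported in K with ∫‖x‖^r dP < ∞, one has ∫ ‖y_s - x‖^r dP(x) ≤ ∫ ‖a - x‖^r dP(x), with strict inequality if P(K) = 1 and P is nonzero. -/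
open MeasureTheory ENNReal

lemma aux_integrable_rpow_dist
    {E : Type*} [NormedAddCommGroup E]
    [MeasurableSpace E] [BorelSpace E]
    (r : ℝ) (hr : 0 < r)
    (P : Measure E) [IsProbabilityMeasure P]
    (hint : Integrable (fun x => ‖x‖ ^ r) P) (c : E) :
    Integrable (fun x => ‖c - x‖ ^ r) P := by
  have hcont : Continuous fun x : E => ‖c - x‖ ^ r :=
    (Real.continuous_rpow_const hr.le).comp ((continuous_const.sub continuous_id).norm)
  refine Integrable.mono' (((integrable_const (‖c‖ ^ r)).add hint).const_mul ((2:ℝ) ^ r))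
    hcont.aestronglyMeasurable (Filter.Eventually.of_forall fun x => ?_)
  have h0 : (0:ℝ) ≤ ‖c - x‖ ^ r := Real.rpow_nonneg (norm_nonneg _) r
  rw [Real.norm_of_nonneg h0]
  have h1 : ‖c - x‖ ≤ 2 * max ‖c‖ ‖x‖ := by
    calc ‖c - x‖ ≤ ‖c‖ + ‖x‖ := norm_sub_le _ _
    _ ≤ max ‖c‖ ‖x‖ + max ‖c‖ ‖x‖ := add_le_add (le_max_left _ _) (le_max_right _ _)
    _ = 2 * max ‖c‖ ‖x‖ := by ring
  calc ‖c - x‖ ^ r ≤ (2 * max ‖c‖ ‖x‖) ^ r :=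
        Real.rpow_le_rpow (norm_nonneg _) h1 hr.le
    _ = 2 ^ r * (max ‖c‖ ‖x‖) ^ r := by
        rw [Real.mul_rpow (by norm_num) (le_max_of_le_left (norm_nonneg _))]
    _ ≤ 2 ^ r * (‖c‖ ^ r + ‖x‖ ^ r) := by
        refine mul_le_mul_of_nonneg_left ?_ (Real.rpow_nonneg (by norm_num) r)
        rcases max_cases ‖c‖ ‖x‖ with ⟨h, _⟩ | ⟨h, _⟩ <;> rw [h]
        · exact le_add_of_nonneg_right (Real.rpow_nonneg (norm_nonneg _) r)
        · exact le_add_of_nonneg_left (Real.rpow_nonneg (norm_nonneg _) r)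

/-- Moving from `a ∉ K` towards its projection on closed convex `K` does not increase,
and in fact strictly decreases, the `L^r`-distortion w.r.t. any probability measure
supported in `K`. -/
theorem integral_rpow_dist_decrease_towards_projection
    {E : Type*} [NormedAddCommGroup E] [InnerProductSpace ℝ E] [CompleteSpace E]
    [MeasurableSpace E] [BorelSpace E]
    (K : Set E) (hK : K.Nonempty) (hKc : IsClosed K) (hKconv : Convex ℝ K)
    (a : E) (ha : a ∉ K) (b : E) (hb : b ∈ K)
    (hproj : ∀ x ∈ K, inner ℝ (a - b) (x - b) ≤ (0 : ℝ))
    (s : ℝ) (hs : s ∈ Set.Ioc (0 : ℝ) 1)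
    (r : ℝ) (hr : 0 < r)
    (P : Measure E) [IsProbabilityMeasure P] (hPK : P K = 1)
    (hint : Integrable (fun x => ‖x‖ ^ r) P) :
    (∫ x, ‖(s • b + (1 - s) • a) - x‖ ^ r ∂P) ≤ (∫ x, ‖a - x‖ ^ r ∂P) ∧
    (∫ x, ‖(s • b + (1 - s) • a) - x‖ ^ r ∂P) < ∫ x, ‖a - x‖ ^ r ∂P := by
  obtain ⟨hs0, hs1⟩ := hs
  set y : E := s • b + (1 - s) • a with hy
  -- a ≠ b
  have hab : a - b ≠ 0 := fun h => ha (by rwa [sub_eq_zero.mp h])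
  have habn : (0:ℝ) < ‖a - b‖ := norm_pos_iff.mpr hab
  -- pointwise strict inequality on K
  have key : ∀ x ∈ K, ‖y - x‖ ^ r < ‖a - x‖ ^ r := by
    intro x hx
    have hlt : ‖y - x‖ < ‖a - x‖ := by
      refine lt_of_pow_lt_pow_left₀ 2 (norm_nonneg _) ?_
      have hyx : y - x = (a - x) - s • (a - b) := by
        rw [hy]; module
      rw [hyx, norm_sub_sq_real]
      have hinner : inner ℝ (a - x) (s • (a - b)) = s * inner ℝ (a - x) (a - b) := by
        rw [real_inner_smul_right]
      have hdecomp : inner ℝ (a - x) (a - b) =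
          ‖a - b‖ ^ 2 - (inner ℝ (a - b) (x - b) : ℝ) := by
        have : a - x = (a - b) - (x - b) := by abel
        rw [this, inner_sub_left, real_inner_self_eq_norm_sq]
        rw [real_inner_comm (x - b) (a - b)]
      have h1 : ‖a - b‖ ^ 2 ≤ inner ℝ (a - x) (a - b) := by
        rw [hdecomp]
        linarith [hproj x hx]
      have h2 : ‖s • (a - b)‖ ^ 2 = s ^ 2 * ‖a - b‖ ^ 2 := by
        rw [norm_smul, mul_pow, Real.norm_of_nonneg hs0.le]
      rw [hinner, h2]
      have hab2 : (0:ℝ) < ‖a - b‖ ^ 2 := pow_pos habn 2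
      nlinarith [mul_le_mul_of_nonneg_left h1 hs0.le, mul_pos hs0 hab2,
        mul_le_mul_of_nonneg_left hs1 hs0.le]
    exact Real.rpow_lt_rpow (norm_nonneg _) hlt hr
  -- a.e. membership in K
  have hKm : MeasurableSet K := hKc.measurableSet
  have haeK : ∀ᵐ x ∂P, x ∈ K := by
    rw [ae_iff]
    have : {x | ¬ x ∈ K} = Kᶜ := rfl
    rw [this, measure_compl hKm (measure_ne_top _ _), hPK, measure_univ, tsub_self]
  have hfi : Integrable (fun x => ‖y - x‖ ^ r) P :=
    aux_integrable_rpow_dist r hr P hint y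
  have hgi : Integrable (fun x => ‖a - x‖ ^ r) P :=
    aux_integrable_rpow_dist r hr P hint a
  have haelt : ∀ᵐ x ∂P, ‖y - x‖ ^ r < ‖a - x‖ ^ r :=
    haeK.mono fun x hx => key x hx
  have hle : (∫ x, ‖y - x‖ ^ r ∂P) ≤ ∫ x, ‖a - x‖ ^ r ∂P :=
    integral_mono_ae hfi hgi (haelt.mono fun x h => h.le)
  refine ⟨hle, ?_⟩
  -- strict inequality via the positive difference
  have hdi : Integrable (fun x => ‖a - x‖ ^ r - ‖y - x‖ ^ r) P := hgi.sub hfi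
  have hpos : 0 < ∫ x, (‖a - x‖ ^ r - ‖y - x‖ ^ r) ∂P := by
    rw [integral_pos_iff_support_of_nonneg_ae (haelt.mono fun x h => by dsimp; linarith) hdi]
    set g : E → ℝ := fun x => ‖a - x‖ ^ r - ‖y - x‖ ^ r
    have hsub : {x | 0 < g x} ⊆ Function.support g := fun x hx => ne_of_gt hx
    have hnull : P {x | ¬ 0 < g x} = 0 := by
      have : ∀ᵐ x ∂P, 0 < g x := haelt.mono fun x h => by simp only [g]; linarith
      exact this
    have h1 : (1:ℝ≥0∞) ≤ P {x | 0 < g x} := by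
      have hu : ({x | 0 < g x} ∪ {x | ¬ 0 < g x}) = Set.univ := by
        ext x
        simp only [Set.mem_union, Set.mem_setOf_eq, Set.mem_univ, iff_true]
        exact em _
      have := measure_union_le (μ := P) {x | 0 < g x} {x | ¬ 0 < g x}
      rw [hu, measure_univ, hnull, add_zero] at this
      exact this
    exact lt_of_lt_of_le (by norm_num) (le_trans h1 (measure_mono hsub))
  have := integral_sub hgi hfi
  rw [this] at hpos
  linarith
end

section
/- In E = ℝ with P the uniform distribution on [-1,1] and r ∈ (0,∞), the pair (a_1, a_2) = (0, 3) is a local (but not global) minimizer of the distortion G_{r,2}(a_1,a_2) = ∫ min(|x-a_1|^r, |x-a_2|^r) dP(x); indeed on a neighbourhood of (0,3), G_{r,2}(b_1,b_2) = ∫_{-1}^{1} |x - b_1|^r dx/2 and this is minimized at b_1 = 0. -/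
open MeasureTheory Set intervalIntegral

lemma cont_abs_rpow (r b : ℝ) (hr : 0 < r) : Continuous (fun x : ℝ => |x - b| ^ r) := by
  exact (continuous_abs.comp (continuous_id.sub continuous_const)).rpow_const
    (fun x => Or.inr hr.le)

lemma key (r : ℝ) (hr : 0 < r) (b₁ b₂ : ℝ) (h1 : |b₁| < 1/4) (h2 : |b₂ - 3| < 1/4) :
    (∫ x in (-1 : ℝ)..1, min (|x - b₁| ^ r) (|x - b₂| ^ r)) =
      ((1 + b₁) ^ (r + 1) + (1 - b₁) ^ (r + 1)) / (r + 1) := by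
  have hb1 : -(1/4) < b₁ ∧ b₁ < 1/4 := abs_lt.1 h1
  have hb2 : -(1/4) < b₂ - 3 ∧ b₂ - 3 < 1/4 := abs_lt.1 h2
  have hcongr : ∀ x ∈ uIcc (-1 : ℝ) 1,
      min (|x - b₁| ^ r) (|x - b₂| ^ r) = |x - b₁| ^ r := by
    intro x hx
    rw [uIcc_of_le (by norm_num), mem_Icc] at hx
    refine min_eq_left (Real.rpow_le_rpow (abs_nonneg _) ?_ hr.le)
    rw [abs_le]
    constructor
    · nlinarith [abs_nonneg (x - b₂), le_abs_self (b₂ - x), neg_abs_le (x - b₂)]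
    · nlinarith [le_abs_self (b₂ - x), abs_sub_comm x b₂, le_abs_self (x - b₂)]
  rw [integral_congr hcongr]
  have hsplit : (∫ x in (-1 : ℝ)..1, |x - b₁| ^ r) =
      (∫ x in (-1 : ℝ)..b₁, |x - b₁| ^ r) + ∫ x in b₁..(1:ℝ), |x - b₁| ^ r := by
    rw [integral_add_adjacent_intervals] <;>
      exact (cont_abs_rpow r b₁ hr).intervalIntegrable _ _
  rw [hsplit]
  have hL : (∫ x in (-1 : ℝ)..b₁, |x - b₁| ^ r) = (1 + b₁) ^ (r + 1) / (r + 1) := by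
    have : (∫ x in (-1 : ℝ)..b₁, |x - b₁| ^ r) = ∫ x in (-1 : ℝ)..b₁, (b₁ - x) ^ r := by
      apply integral_congr
      intro x hx
      rw [uIcc_of_le (by linarith [hb1.1] : (-1:ℝ) ≤ b₁), mem_Icc] at hx
      show |x - b₁| ^ r = (b₁ - x) ^ r
      rw [abs_sub_comm, abs_of_nonneg (by linarith [hx.2] : (0:ℝ) ≤ b₁ - x)]
    rw [this, integral_comp_sub_left (fun x => x ^ r) b₁, sub_self]
    rw [integral_rpow (Or.inl (by linarith))]
    rw [Real.zero_rpow (by positivity)]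
    ring_nf
  have hR : (∫ x in b₁..(1:ℝ), |x - b₁| ^ r) = (1 - b₁) ^ (r + 1) / (r + 1) := by
    have : (∫ x in b₁..(1:ℝ), |x - b₁| ^ r) = ∫ x in b₁..(1:ℝ), (x - b₁) ^ r := by
      apply integral_congr
      intro x hx
      rw [uIcc_of_le (by linarith [hb1.2] : b₁ ≤ 1), mem_Icc] at hx
      show |x - b₁| ^ r = (x - b₁) ^ r
      rw [abs_of_nonneg (by linarith [hx.1] : (0:ℝ) ≤ x - b₁)]
    rw [this, integral_comp_sub_right (fun x => x ^ r) b₁, sub_self]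
    rw [integral_rpow (Or.inl (by linarith))]
    rw [Real.zero_rpow (by positivity)]
    ring_nf
  rw [hL, hR]; ring

lemma two_le (r b : ℝ) (hr : 0 < r) (hb : |b| ≤ 1) :
    2 ≤ (1 + b) ^ (r + 1) + (1 - b) ^ (r + 1) := by
  have hb' := abs_le.1 hb
  have hcx := convexOn_rpow (p := r + 1) (by linarith)
  have h := hcx.2 (x := 1 - b) (y := 1 + b) (by simp; linarith) (by simp; linarith)
    (by norm_num : (0:ℝ) ≤ 1/2) (by norm_num : (0:ℝ) ≤ 1/2) (by norm_num)
  simp only [smul_eq_mul] at h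
  have heq : (1/2 : ℝ) * (1 - b) + (1/2) * (1 + b) = 1 := by ring
  rw [heq, Real.one_rpow] at h
  linarith

/-- For `P` uniform on `[-1,1]` and any `r ∈ (0,∞)`, the pair `(0, 3)` is a local but
not global minimizer of the level-2 distortion
`G(b₁,b₂) = (1/2)∫_{-1}^1 min(|x-b₁|^r, |x-b₂|^r) dx`. -/
theorem uniform_local_not_global_min (r : ℝ) (hr : 0 < r) :
    IsLocalMin
      (fun p : ℝ × ℝ =>
        (1 / 2) * ∫ x in (-1 : ℝ)..1, min (|x - p.1| ^ r) (|x - p.2| ^ r))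
      ((0 : ℝ), (3 : ℝ)) ∧
    ∃ q : ℝ × ℝ,
      (1 / 2) * (∫ x in (-1 : ℝ)..1, min (|x - q.1| ^ r) (|x - q.2| ^ r)) <
      (1 / 2) * ∫ x in (-1 : ℝ)..1, min (|x - (0 : ℝ)| ^ r) (|x - (3 : ℝ)| ^ r) := by
  have hval : (∫ x in (-1 : ℝ)..1, min (|x - (0:ℝ)| ^ r) (|x - (3:ℝ)| ^ r)) = 2 / (r + 1) := by
    rw [key r hr 0 3 (by norm_num) (by norm_num)]
    norm_num
  constructor
  · have hmem : {p : ℝ × ℝ | |p.1| < 1/4 ∧ |p.2 - 3| < 1/4} ∈ nhds ((0:ℝ), (3:ℝ)) := by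
      apply IsOpen.mem_nhds
      · exact ((isOpen_lt (continuous_abs.comp continuous_fst) continuous_const).and
          (isOpen_lt (continuous_abs.comp (continuous_snd.sub continuous_const))
            continuous_const))
      · constructor <;> norm_num
    filter_upwards [hmem] with p hp
    show (1/2) * (∫ x in (-1:ℝ)..1, min (|x - (0:ℝ)| ^ r) (|x - (3:ℝ)| ^ r)) ≤
      (1/2) * ∫ x in (-1:ℝ)..1, min (|x - p.1| ^ r) (|x - p.2| ^ r)
    rw [hval, key r hr p.1 p.2 hp.1 hp.2]
    have hb := abs_lt.1 hp.1
    have h2 : (2:ℝ) ≤ (1 + p.1) ^ (r + 1) + (1 - p.1) ^ (r + 1) :=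
      two_le r p.1 hr (abs_le.2 ⟨by linarith [hb.1], by linarith [hb.2]⟩)
    have hrp : (0:ℝ) < r + 1 := by linarith
    gcongr
  · refine ⟨(0, 1), ?_⟩
    rw [hval]
    have hlt : (∫ x in (-1 : ℝ)..1, min (|x - (0:ℝ)| ^ r) (|x - (1:ℝ)| ^ r)) <
        ∫ x in (-1 : ℝ)..1, |x - (0:ℝ)| ^ r := by
      apply integral_lt_integral_of_continuousOn_of_le_of_exists_lt (by norm_num)
      · exact ((cont_abs_rpow r 0 hr).min (cont_abs_rpow r 1 hr)).continuousOn
      · exact (cont_abs_rpow r 0 hr).continuousOn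
      · exact fun x _ => min_le_left _ _
      · refine ⟨1, by norm_num, ?_⟩
        norm_num [Real.zero_rpow hr.ne', Real.one_rpow]
    have hval0 : (∫ x in (-1 : ℝ)..1, |x - (0:ℝ)| ^ r) = 2 / (r + 1) := by
      rw [← hval]
      apply integral_congr
      intro x hx
      rw [uIcc_of_le (by norm_num), mem_Icc] at hx
      show |x - (0:ℝ)| ^ r = min (|x - (0:ℝ)| ^ r) (|x - (3:ℝ)| ^ r)
      refine (min_eq_left (Real.rpow_le_rpow (abs_nonneg _) ?_ hr.le)).symm
      rw [abs_le]
      constructor <;> [skip; skip] <;>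
        nlinarith [le_abs_self (x - 3), neg_abs_le (x - 3), le_abs_self (3 - x),
          abs_nonneg (x - 3)]
    rw [← hval0]
    have : (0:ℝ) < 1/2 := by norm_num
    exact mul_lt_mul_of_pos_left hlt this
end

section
/- Let E be a normed space and Γ = {a_1,...,a_n} with pairwise distinct points. If E is strictly convex (the unit sphere contains no nontrivial line segments) and n = 2, then the set {x ∈ E : ‖x - a_1‖ = ‖x - a_2‖} (the boundary between the two Voronoi cells) has empty interior. -/
/-- In a strictly convex normed space, the bisector of two distinct points has empty
interior. -/
theorem bisector_empty_interior
    {E : Type*} [NormedAddCommGroup E] [NormedSpace ℝ E]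
    (hsc : ∀ x y : E, ‖x‖ = 1 → ‖y‖ = 1 → x ≠ y → ‖(2 : ℝ)⁻¹ • (x + y)‖ < 1)
    (a₁ a₂ : E) (h : a₁ ≠ a₂) :
    interior {x : E | ‖x - a₁‖ = ‖x - a₂‖} = ∅ := by
  haveI : StrictConvexSpace ℝ E := by
    apply StrictConvexSpace.of_norm_add
    intro x y hx hy hxy
    by_contra hne
    have hne' : x ≠ y := fun he => hne (he ▸ SameRay.rfl)
    have h1 := hsc x y hx hy hne'
    rw [norm_smul, hxy] at h1
    norm_num at h1
  rw [Set.eq_empty_iff_forall_notMem]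
  intro x hx
  obtain ⟨ε, hε, hball⟩ := Metric.isOpen_iff.1 isOpen_interior x hx
  have hmem : ∀ y ∈ Metric.ball x ε, ‖y - a₁‖ = ‖y - a₂‖ := fun y hy => by
    have := interior_subset (hball hy); exact this
  have hx' : ‖x - a₁‖ = ‖x - a₂‖ := by
    have := interior_subset hx; exact this
  set r : ℝ := ‖x - a₁‖ with hr_def
  have hr : 0 < r := by
    rcases eq_or_lt_of_le (norm_nonneg (x - a₁)) with h1 | h1
    · exfalso
      have hxa1 : x = a₁ := by
        have := norm_eq_zero.1 h1.symm; exact sub_eq_zero.1 this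
      have hxa2 : x = a₂ := by
        have : ‖x - a₂‖ = 0 := by rw [← hx']; exact h1.symm
        exact sub_eq_zero.1 (norm_eq_zero.1 this)
      exact h (hxa1 ▸ hxa2)
    · exact h1
  set t : ℝ := min (ε / r) 1 / 2 with ht_def
  have ht0 : 0 < t := by positivity
  have ht1 : t < 1 := by
    have : min (ε / r) 1 ≤ 1 := min_le_right _ _
    linarith
  set z : E := x - t • (x - a₁) with hz_def
  have hxz : x - z = t • (x - a₁) := by simp [hz_def]
  have hza1 : z - a₁ = (1 - t) • (x - a₁) := by
    rw [hz_def, sub_smul, one_smul]; abel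
  have hnxz : ‖x - z‖ = t * r := by
    rw [hxz, norm_smul, Real.norm_eq_abs, abs_of_pos ht0, hr_def]
  have hnza1 : ‖z - a₁‖ = (1 - t) * r := by
    rw [hza1, norm_smul, Real.norm_eq_abs, abs_of_pos (by linarith), hr_def]
  have hzball : z ∈ Metric.ball x ε := by
    rw [Metric.mem_ball, dist_eq_norm, ← neg_sub, norm_neg, hnxz]
    have h2 : t * r ≤ ε / r / 2 * r := by
      apply mul_le_mul_of_nonneg_right _ hr.le
      rw [ht_def]
      exact div_le_div_of_nonneg_right (min_le_left _ _) (by norm_num)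
    have : ε / r / 2 * r = ε / 2 := by field_simp
    rw [this] at h2
    linarith
  have hnza2 : ‖z - a₂‖ = (1 - t) * r := by rw [← hmem z hzball, hnza1]
  have hsum : ‖(x - z) + (z - a₂)‖ = ‖x - z‖ + ‖z - a₂‖ := by
    have : (x - z) + (z - a₂) = x - a₂ := by abel
    rw [this, ← hx', hnxz, hnza2]; ring
  have hray : SameRay ℝ (x - z) (z - a₂) := sameRay_iff_norm_add.2 hsum
  have hxz0 : x - z ≠ 0 := by
    rw [← norm_pos_iff, hnxz]; positivity
  have hza20 : z - a₂ ≠ 0 := by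
    rw [← norm_pos_iff, hnza2]; nlinarith
  obtain ⟨a, b, ha, hb, hab⟩ := hray.exists_pos hxz0 hza20
  -- a • (x - z) = b • (z - a₂)
  have key : z - a₂ = (a / b) • (x - z) := by
    have hkey : (b⁻¹ * a) • (x - z) = b⁻¹ • (b • (z - a₂)) := by rw [mul_smul, hab]
    rw [inv_smul_smul₀ hb.ne'] at hkey
    rw [← hkey, div_eq_inv_mul]
  have hnorm : (1 - t) * r = a / b * (t * r) := by
    rw [← hnza2, key, norm_smul, Real.norm_eq_abs, abs_of_pos (by positivity), hnxz]
  have hab' : a / b * t = 1 - t := by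
    have := hnorm
    field_simp at this ⊢
    nlinarith [hr]
  have : z - a₂ = z - a₁ := by
    rw [key, hxz, smul_smul, hab', ← hza1]
  exact h (sub_right_injective this).symm
end
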